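/- Disjunction synthesis combination: suppose for i = 1,2 there are arrow updates (U_i,o_i) with ⊨ ⟨↑⟩φ_i ↔ ⟨U_i,o_i⟩φ_i. Construct U with outcomes {o} ∪ O_1 ∪ O_2, keeping all arrows of U_1 and U_2, and adding for each arrow (o_1,ψ)→_a(o',ψ') of U_1 an arrow (o, ψ∧⟨U_1,o_1⟩φ_1)→_a(o',ψ'), and for each arrow (o_2,ψ)→_a(o',ψ') of U_2 an arrow (o, ψ∧¬⟨U_1,o_1⟩φ_1)→_a(o',ψ'). Then ⊨ ⟨↑⟩(φ_1∨φ_2) ↔ ⟨U,o⟩(φ_1∨φ_2). -/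

import Mathlib

namespace AAUML

/-- Formulas of arbitrary arrow update model logic over atoms `P` and agents `A`.
An arrow update model is encoded as a finite list of arrows
`(agent, source outcome, source condition, target outcome, target condition)`,
with outcomes drawn from `ℕ`; `upd U o φ` is `[U,o]φ` and `all φ` is `[↑]φ`. -/
inductive Form (P A : Type) : Type where
  | atom : P → Form P A
  | neg  : Form P A → Form P A
  | and  : Form P A → Form P A → Form P A
  | box  : A → Form P A → Form P A
  | upd  : List (A × ℕ × Form P A × ℕ × Form P A) → ℕ → Form P A → Form P A
  | all  : Form P A → Form P A

/-- An arrow: agent, source outcome, source condition, target outcome, target condition. -/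
abbrev Arrow (P A : Type) := A × ℕ × Form P A × ℕ × Form P A

/-- Formulas of basic multi-agent modal logic: no update modality, no quantifier. -/
inductive Form.Modal {P A : Type} : Form P A → Prop
  | atom (p : P) : Form.Modal (.atom p)
  | neg {φ : Form P A} : Form.Modal φ → Form.Modal (.neg φ)
  | and {φ ψ : Form P A} : Form.Modal φ → Form.Modal ψ → Form.Modal (.and φ ψ)
  | box (a : A) {φ : Form P A} : Form.Modal φ → Form.Modal (.box a φ)

/-- Formulas of arrow update model logic (no arbitrary-update quantifier anywhere,
including inside the conditions of arrow update models). -/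
inductive Form.NoQuant {P A : Type} : Form P A → Prop
  | atom (p : P) : Form.NoQuant (.atom p)
  | neg {φ : Form P A} : Form.NoQuant φ → Form.NoQuant (.neg φ)
  | and {φ ψ : Form P A} : Form.NoQuant φ → Form.NoQuant ψ → Form.NoQuant (.and φ ψ)
  | box (a : A) {φ : Form P A} : Form.NoQuant φ → Form.NoQuant (.box a φ)
  | upd {U : List (Arrow P A)} (o : ℕ) {φ : Form P A} : Form.NoQuant φ →
      (∀ ar ∈ U, Form.NoQuant ar.2.2.1) → (∀ ar ∈ U, Form.NoQuant ar.2.2.2.2) →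
      Form.NoQuant (.upd U o φ)

/-- Propositional formulas (no modalities at all). -/
inductive Form.Prp {P A : Type} : Form P A → Prop
  | atom (p : P) : Form.Prp (.atom p)
  | neg {φ : Form P A} : Form.Prp φ → Form.Prp (.neg φ)
  | and {φ ψ : Form P A} : Form.Prp φ → Form.Prp ψ → Form.Prp (.and φ ψ)

/-- A relational (Kripke) model. -/
structure KModel (P A : Type) : Type 1 where
  World : Type
  R : A → World → World → Prop
  V : World → P → Prop

variable {P A : Type}

/-- Satisfaction for basic modal formulas (junk value `False` on updates/quantifiers;
only used on modal formulas). -/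
def msat (M : KModel P A) : M.World → Form P A → Prop
  | s, .atom p => M.V s p
  | s, .neg φ => ¬ msat M s φ
  | s, .and φ ψ => msat M s φ ∧ msat M s ψ
  | s, .box a φ => ∀ t, M.R a s t → msat M t φ
  | _, .upd _ _ _ => False
  | _, .all _ => False

/-- Some arrow of `U` for agent `a` from outcome `o` to outcome `o'` has its (modal)
source condition true at `s` and its target condition true at `s'`. -/
def marrowOK (M : KModel P A) (U : List (Arrow P A)) (a : A) (o o' : ℕ)
    (s s' : M.World) : Prop :=
  ∃ ψ ψ', (a, o, ψ, o', ψ') ∈ U ∧ msat M s ψ ∧ msat M s' ψ'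

/-- All source and target conditions of `U` are basic modal formulas. -/
def ModalArrows (U : List (Arrow P A)) : Prop :=
  ∀ ar ∈ U, Form.Modal ar.2.2.1 ∧ Form.Modal ar.2.2.2.2

mutual
  /-- Satisfaction `M,s ⊨ φ`.  The case `upd U o φ` is interpreted in the product
  model `M*U` (inlined); `all φ` quantifies over all arrow update models with basic
  modal source and target conditions. -/
  def Form.sat : (M : KModel P A) → M.World → Form P A → Prop
    | M, s, .atom p => M.V s p
    | M, s, .neg φ => ¬ Form.sat M s φ
    | M, s, .and φ ψ => Form.sat M s φ ∧ Form.sat M s ψ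
    | M, s, .box a φ => ∀ t, M.R a s t → Form.sat M t φ
    | M, s, .upd U o φ =>
        Form.sat ⟨M.World × ℕ,
          fun a x y => M.R a x.1 y.1 ∧ satList M U a x.2 y.2 x.1 y.1,
          fun x p => M.V x.1 p⟩ (s, o) φ
    | M, s, .all φ => ∀ (U : List (Arrow P A)) (o : ℕ), ModalArrows U →
        Form.sat ⟨M.World × ℕ,
          fun a x y => M.R a x.1 y.1 ∧ marrowOK M U a x.2 y.2 x.1 y.1,
          fun x p => M.V x.1 p⟩ (s, o) φ
  termination_by M s φ => sizeOf φ

  /-- Some arrow of the list, for agent `a`, from `o` to `o'`, has its source condition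
  true at `s` and its target condition true at `s'`. -/
  def satList : (M : KModel P A) → List (Arrow P A) → A → ℕ → ℕ → M.World → M.World → Prop
    | _, [], _, _, _, _, _ => False
    | M, (b, o1, ψ, o2, ψ') :: rest, a, o, o', s, s' =>
        (b = a ∧ o1 = o ∧ o2 = o' ∧ Form.sat M s ψ ∧ Form.sat M s' ψ') ∨
        satList M rest a o o' s s'
  termination_by M U a o o' s s' => sizeOf U
end

/-- The product `M*U` of a relational model and an arrow update model. -/
def prodModel (M : KModel P A) (U : List (Arrow P A)) : KModel P A :=
  ⟨M.World × ℕ,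
   fun a x y => M.R a x.1 y.1 ∧ satList M U a x.2 y.2 x.1 y.1,
   fun x p => M.V x.1 p⟩

def Valid (φ : Form P A) : Prop := ∀ (M : KModel P A) (s : M.World), Form.sat M s φ

def Form.or (φ ψ : Form P A) : Form P A := .neg (.and (.neg φ) (.neg ψ))
def Form.imp (φ ψ : Form P A) : Form P A := .neg (.and φ (.neg ψ))
def Form.dia (a : A) (φ : Form P A) : Form P A := .neg (.box a (.neg φ))
/-- `⟨U,o⟩φ` -/
def Form.diaUpd (U : List (Arrow P A)) (o : ℕ) (φ : Form P A) : Form P A :=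
  .neg (.upd U o (.neg φ))
/-- `⟨↑⟩φ` -/
def Form.ex (φ : Form P A) : Form P A := .neg (.all (.neg φ))
/-- A canonical tautology. -/
def Form.top [Inhabited P] : Form P A := .neg (.and (.atom default) (.neg (.atom default)))
/-- Finite conjunction. -/
def Form.conj [Inhabited P] : List (Form P A) → Form P A
  | [] => Form.top
  | φ :: rest => .and φ (Form.conj rest)

/-- `Z` is a bisimulation between `M` and `N`. -/
def IsBisim (M N : KModel P A) (Z : M.World → N.World → Prop) : Prop :=
  ∀ s s', Z s s' →
    (∀ p, M.V s p ↔ N.V s' p) ∧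
    (∀ a t, M.R a s t → ∃ t', N.R a s' t' ∧ Z t t') ∧
    (∀ a t', N.R a s' t' → ∃ t, M.R a s t ∧ Z t t')

/-- Bisimilarity of pointed models. -/
def Bisimilar (M : KModel P A) (s : M.World) (N : KModel P A) (s' : N.World) : Prop :=
  ∃ Z, IsBisim M N Z ∧ Z s s'

/-- An action model: actions with accessibility relations and preconditions. -/
structure AModel (P A : Type) : Type 1 where
  Action : Type
  rel : A → Action → Action → Prop
  pre : Action → Form P A

/-- The restricted modal product `M ⊗ E`. -/
def actProd (M : KModel P A) (E : AModel P A) : KModel P A :=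
  ⟨{x : M.World × E.Action // Form.sat M x.1 (E.pre x.2)},
   fun a x y => M.R a x.1.1 y.1.1 ∧ E.rel a x.1.2 y.1.2,
   fun x p => M.V x.1.1 p⟩

/-- `M,s ⊨ [E,e]φ`: if the precondition of `e` holds at `s` then `φ` holds at `(s,e)`
in `M ⊗ E`. -/
def actSat (M : KModel P A) (E : AModel P A) (s : M.World) (e : E.Action)
    (φ : Form P A) : Prop :=
  ∀ h : Form.sat M s (E.pre e), Form.sat (actProd M E) ⟨(s, e), h⟩ φ


/-- Rename outcomes of an arrow update model along `f`. -/
def shiftArrows (f : ℕ → ℕ) (U : List (Arrow P A)) : List (Arrow P A) :=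
  U.map (fun ar => (ar.1, f ar.2.1, ar.2.2.1, f ar.2.2.2.1, ar.2.2.2.2))

/-- The combined arrow update model of Lemma `AAUL_disjunction_combination`:
outcomes are a fresh outcome `0` together with (disjoint copies of) the outcomes of
`U₁` and `U₂` (outcome `k` of `Uᵢ` is renamed to `3k+i`); it keeps all arrows of `U₁`
and `U₂`, and for each arrow `(o₁,ψ)→_a(o',ψ')` of `U₁` adds an arrow
`(0, ψ∧⟨U₁,o₁⟩φ₁)→_a(o',ψ')`, and for each arrow `(o₂,ψ)→_a(o',ψ')` of `U₂` adds an
arrow `(0, ψ∧¬⟨U₁,o₁⟩φ₁)→_a(o',ψ')`. -/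
def combineU (U1 U2 : List (Arrow P A)) (o1 o2 : ℕ) (φ1 : Form P A) :
    List (Arrow P A) :=
  shiftArrows (fun k => 3*k+1) U1 ++ shiftArrows (fun k => 3*k+2) U2 ++
  ((U1.filter (fun ar => ar.2.1 == o1)).map (fun ar =>
     (ar.1, 0, Form.and ar.2.2.1 (Form.diaUpd U1 o1 φ1), 3*ar.2.2.2.1+1, ar.2.2.2.2))) ++
  ((U2.filter (fun ar => ar.2.1 == o2)).map (fun ar =>
     (ar.1, 0, Form.and ar.2.2.1 (Form.neg (Form.diaUpd U1 o1 φ1)), 3*ar.2.2.2.1+2, ar.2.2.2.2)))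

section Aux
open Classical
variable {P A : Type}

attribute [local instance] Classical.propDecidable

/-- membership characterization of satList -/
theorem satList_iff_mem (M : KModel P A) (L : List (Arrow P A)) (a : A) (o o' : ℕ)
    (s s' : M.World) :
    satList M L a o o' s s' ↔
      ∃ ψ ψ', (a, o, ψ, o', ψ') ∈ L ∧ Form.sat M s ψ ∧ Form.sat M s' ψ' := by
  induction L with
  | nil => simp [satList]
  | cons ar rest ih =>
    obtain ⟨b, o1, ψ, o2, ψ'⟩ := ar
    rw [satList, ih]
    constructor
    · rintro (⟨rfl, rfl, rfl, h1, h2⟩ | ⟨χ, χ', hm, h1, h2⟩)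
      · exact ⟨ψ, ψ', by simp, h1, h2⟩
      · exact ⟨χ, χ', by simp [hm], h1, h2⟩
    · rintro ⟨χ, χ', hm, h1, h2⟩
      rcases List.mem_cons.1 hm with heq | hm'
      · rw [Prod.mk.injEq, Prod.mk.injEq, Prod.mk.injEq, Prod.mk.injEq] at heq
        obtain ⟨e1, e2, e3, e4, e5⟩ := heq
        subst e1; subst e2; subst e3; subst e4; subst e5
        exact Or.inl ⟨rfl, rfl, rfl, h1, h2⟩
      · exact Or.inr ⟨χ, χ', hm', h1, h2⟩

theorem sat_atom (M : KModel P A) (s : M.World) (p : P) :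
    Form.sat M s (.atom p) ↔ M.V s p := by rw [Form.sat]
theorem sat_neg (M : KModel P A) (s : M.World) (φ : Form P A) :
    Form.sat M s (.neg φ) ↔ ¬ Form.sat M s φ := by rw [Form.sat]
theorem sat_and (M : KModel P A) (s : M.World) (φ ψ : Form P A) :
    Form.sat M s (.and φ ψ) ↔ Form.sat M s φ ∧ Form.sat M s ψ := by rw [Form.sat]
theorem sat_box (M : KModel P A) (s : M.World) (a : A) (φ : Form P A) :
    Form.sat M s (.box a φ) ↔ ∀ t, M.R a s t → Form.sat M t φ := by rw [Form.sat]
theorem sat_upd (M : KModel P A) (s : M.World) (U : List (Arrow P A)) (o : ℕ) (φ : Form P A) :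
    Form.sat M s (.upd U o φ) ↔ Form.sat (prodModel M U) (s, o) φ := by
  rw [Form.sat]; rfl

/-- the product model used in the `all` clause. -/
def prodA (M : KModel P A) (U : List (Arrow P A)) : KModel P A :=
  ⟨M.World × ℕ,
   fun a x y => M.R a x.1 y.1 ∧ marrowOK M U a x.2 y.2 x.1 y.1,
   fun x p => M.V x.1 p⟩

theorem sat_all (M : KModel P A) (s : M.World) (φ : Form P A) :
    Form.sat M s (.all φ) ↔ ∀ (U : List (Arrow P A)) (o : ℕ), ModalArrows U →
      Form.sat (prodA M U) (s, o) φ := by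
  rw [Form.sat]; rfl

theorem sat_ex (M : KModel P A) (s : M.World) (φ : Form P A) :
    Form.sat M s (Form.ex φ) ↔ ∃ (U : List (Arrow P A)) (o : ℕ), ModalArrows U ∧
      Form.sat (prodA M U) (s, o) φ := by
  rw [Form.ex, sat_neg, sat_all]
  push_neg
  constructor
  · rintro ⟨U, o, h1, h2⟩
    exact ⟨U, o, h1, not_not.1 (mt (sat_neg _ _ _).2 h2)⟩
  · rintro ⟨U, o, h1, h2⟩
    exact ⟨U, o, h1, fun hn => (sat_neg _ _ _).1 hn h2⟩

theorem sat_diaUpd (M : KModel P A) (s : M.World) (U : List (Arrow P A)) (o : ℕ)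
    (φ : Form P A) :
    Form.sat M s (Form.diaUpd U o φ) ↔ Form.sat (prodModel M U) (s, o) φ := by
  rw [Form.diaUpd, sat_neg, sat_upd]; exact (not_congr (sat_neg _ _ _)).trans not_not

theorem sat_or (M : KModel P A) (s : M.World) (φ ψ : Form P A) :
    Form.sat M s (Form.or φ ψ) ↔ Form.sat M s φ ∨ Form.sat M s ψ := by
  rw [Form.or, sat_neg, sat_and, sat_neg, sat_neg]; tauto

end Aux
section Aux2
open Classical
variable {P A : Type}

/-- bounded multi-model equivalence relative to atom list `SP` and agent list `SA`. -/
def Beq (SP : List P) (SA : List A) :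
    ℕ → (M : KModel P A) → M.World → (N : KModel P A) → N.World → Prop
  | 0, M, x, N, y => ∀ p ∈ SP, (M.V x p ↔ N.V y p)
  | k+1, M, x, N, y =>
      (∀ p ∈ SP, (M.V x p ↔ N.V y p)) ∧
      (∀ a ∈ SA, ∀ x', M.R a x x' → ∃ y', N.R a y y' ∧ Beq SP SA k M x' N y') ∧
      (∀ a ∈ SA, ∀ y', N.R a y y' → ∃ x', M.R a x x' ∧ Beq SP SA k M x' N y')

theorem Beq_atoms {SP : List P} {SA : List A} {k : ℕ} {M : KModel P A} {x : M.World}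
    {N : KModel P A} {y : N.World} (h : Beq SP SA k M x N y) :
    ∀ p ∈ SP, (M.V x p ↔ N.V y p) := by
  cases k with
  | zero => exact h
  | succ k => exact h.1

theorem Beq_mono {SP : List P} {SA : List A} : ∀ {k j : ℕ}, j ≤ k →
    ∀ {M : KModel P A} {x : M.World} {N : KModel P A} {y : N.World},
    Beq SP SA k M x N y → Beq SP SA j M x N y := by
  intro k
  induction k with
  | zero => intro j hj; interval_cases j; exact fun h => h
  | succ k ih =>
    intro j hj M x N y h
    cases j with
    | zero => exact h.1
    | succ j =>
      refine ⟨h.1, ?_, ?_⟩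
      · intro a ha x' hx'
        obtain ⟨y', hy', hb⟩ := h.2.1 a ha x' hx'
        exact ⟨y', hy', ih (Nat.succ_le_succ_iff.1 hj) hb⟩
      · intro a ha y' hy'
        obtain ⟨x', hx', hb⟩ := h.2.2 a ha y' hy'
        exact ⟨x', hx', ih (Nat.succ_le_succ_iff.1 hj) hb⟩

theorem bisim_Beq {M N : KModel P A} {Z : M.World → N.World → Prop}
    (hZ : IsBisim M N Z) (SP : List P) (SA : List A) :
    ∀ (k : ℕ) (x : M.World) (y : N.World), Z x y → Beq SP SA k M x N y := by
  intro k
  induction k with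
  | zero => intro x y h; exact fun p _ => (hZ x y h).1 p
  | succ k ih =>
    intro x y h
    obtain ⟨hat, hf, hb⟩ := hZ x y h
    refine ⟨fun p _ => hat p, ?_, ?_⟩
    · intro a _ x' hx'
      obtain ⟨y', hy', hz⟩ := hf a x' hx'
      exact ⟨y', hy', ih x' y' hz⟩
    · intro a _ y' hy'
      obtain ⟨x', hx', hz⟩ := hb a y' hy'
      exact ⟨x', hx', ih x' y' hz⟩

mutual
/-- depth bound for bounded-equivalence invariance. -/
def bnd : Form P A → ℕ
  | .atom _ => 0
  | .neg φ => bnd φ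
  | .and φ ψ => max (bnd φ) (bnd ψ)
  | .box _ φ => bnd φ + 1
  | .upd U _ φ => bnd φ + (bnd φ + 1) * bndL U
  | .all _ => 0
def bndL : List (Arrow P A) → ℕ
  | [] => 0
  | (_, _, ψ, _, ψ') :: rest => max (max (bnd ψ) (bnd ψ')) (bndL rest)
end

theorem bnd_src_le {U : List (Arrow P A)} {ar : Arrow P A} (h : ar ∈ U) :
    bnd ar.2.2.1 ≤ bndL U := by
  induction U with
  | nil => cases h
  | cons b rest ih =>
    obtain ⟨a, o1, ψ, o2, ψ'⟩ := b
    rcases List.mem_cons.1 h with rfl | h'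
    · simp only [bndL]; omega
    · have := ih h'
      simp only [bndL]; omega

theorem bnd_tgt_le {U : List (Arrow P A)} {ar : Arrow P A} (h : ar ∈ U) :
    bnd ar.2.2.2.2 ≤ bndL U := by
  induction U with
  | nil => cases h
  | cons b rest ih =>
    obtain ⟨a, o1, ψ, o2, ψ'⟩ := b
    rcases List.mem_cons.1 h with rfl | h'
    · simp only [bndL]; omega
    · have := ih h'
      simp only [bndL]; omega

mutual
/-- atoms occurring in a formula (including inside update models). -/
def atomsOf : Form P A → List P
  | .atom p => [p]
  | .neg φ => atomsOf φ
  | .and φ ψ => atomsOf φ ++ atomsOf ψ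
  | .box _ φ => atomsOf φ
  | .upd U _ φ => atomsOf φ ++ atomsL U
  | .all φ => atomsOf φ
def atomsL : List (Arrow P A) → List P
  | [] => []
  | (_, _, ψ, _, ψ') :: rest => atomsOf ψ ++ atomsOf ψ' ++ atomsL rest
end

mutual
/-- agents occurring in a formula (including inside update models). -/
def agentsOf : Form P A → List A
  | .atom _ => []
  | .neg φ => agentsOf φ
  | .and φ ψ => agentsOf φ ++ agentsOf ψ
  | .box a φ => a :: agentsOf φ
  | .upd U _ φ => agentsOf φ ++ agentsL U
  | .all φ => agentsOf φ
def agentsL : List (Arrow P A) → List A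
  | [] => []
  | (a, _, ψ, _, ψ') :: rest => a :: (agentsOf ψ ++ agentsOf ψ' ++ agentsL rest)
end

/-- every formula contains an atom. -/
def getAtom : Form P A → P
  | .atom p => p
  | .neg φ => getAtom φ
  | .and φ _ => getAtom φ
  | .box _ φ => getAtom φ
  | .upd _ _ φ => getAtom φ
  | .all φ => getAtom φ

theorem msat_iff_sat {φ : Form P A} (h : Form.Modal φ) (M : KModel P A) :
    ∀ s, msat M s φ ↔ Form.sat M s φ := by
  induction h with
  | atom p => intro s; rw [msat, sat_atom]
  | neg _ ih => intro s; rw [msat, sat_neg, ih]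
  | and _ _ ih1 ih2 => intro s; rw [msat, sat_and, ih1, ih2]
  | box a _ ih =>
    intro s; rw [msat, sat_box]
    exact forall_congr' fun t => imp_congr Iff.rfl (ih t)

end Aux2
section Aux3
open Classical
variable {P A : Type}

/-- `θ` is invariant under `Beq SP SA k` for every `k ≥ bnd θ`. -/
def InvAt (SP : List P) (SA : List A) (θ : Form P A) : Prop :=
  ∀ k, bnd θ ≤ k → ∀ (M : KModel P A) (x : M.World) (N : KModel P A) (y : N.World),
    Beq SP SA k M x N y → (Form.sat M x θ ↔ Form.sat N y θ)

theorem satList_transfer {SP : List P} {SA : List A} {U : List (Arrow P A)} {c : ℕ}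
    (hc : bndL U ≤ c)
    (hsrc : ∀ ar ∈ U, InvAt SP SA ar.2.2.1) (htgt : ∀ ar ∈ U, InvAt SP SA ar.2.2.2.2)
    {M : KModel P A} {x x' : M.World} {N : KModel P A} {y y' : N.World}
    (hxy : Beq SP SA c M x N y) (hxy' : Beq SP SA c M x' N y')
    {a : A} {o o' : ℕ} (h : satList M U a o o' x x') : satList N U a o o' y y' := by
  rw [satList_iff_mem] at h ⊢
  obtain ⟨ψ, ψ', hmem, h1, h2⟩ := h
  refine ⟨ψ, ψ', hmem, ?_, ?_⟩
  · exact (hsrc _ hmem c (le_trans (bnd_src_le hmem) hc) M x N y hxy).1 h1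
  · exact (htgt _ hmem c (le_trans (bnd_tgt_le hmem) hc) M x' N y' hxy').1 h2

theorem Beq_prod {SP : List P} {SA : List A} {U : List (Arrow P A)} {c : ℕ}
    (hc : bndL U ≤ c)
    (hsrc : ∀ ar ∈ U, InvAt SP SA ar.2.2.1) (htgt : ∀ ar ∈ U, InvAt SP SA ar.2.2.2.2) :
    ∀ (j : ℕ) (M : KModel P A) (x : M.World) (N : KModel P A) (y : N.World) (o : ℕ),
    Beq SP SA (j + (j+1)*c) M x N y →
    Beq SP SA j (prodModel M U) (x, o) (prodModel N U) (y, o) := by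
  intro j
  induction j with
  | zero =>
    intro M x N y o h
    exact fun p hp => Beq_atoms h p hp
  | succ j ih =>
    intro M x N y o h
    have e : j + 1 + (j + 1 + 1) * c = (j + (j + 1 + 1) * c) + 1 := by omega
    rw [e] at h
    have hatoms : ∀ p ∈ SP, ((prodModel M U).V (x, o) p ↔ (prodModel N U).V (y, o) p) :=
      fun p hp => Beq_atoms h p hp
    have hxyc : Beq SP SA c M x N y := Beq_mono (by nlinarith) h
    refine ⟨hatoms, ?_, ?_⟩
    · rintro a ha ⟨x', o'⟩ ⟨hR, hsl⟩
      obtain ⟨y', hy', hb⟩ := h.2.1 a ha x' hR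
      have hb' : Beq SP SA (j + (j+1)*c) M x' N y' := Beq_mono (by nlinarith) hb
      have hbc : Beq SP SA c M x' N y' := Beq_mono (by nlinarith) hb
      refine ⟨(y', o'), ⟨hy', satList_transfer hc hsrc htgt hxyc hbc hsl⟩, ih M x' N y' o' hb'⟩
    · rintro a ha ⟨y', o'⟩ ⟨hR, hsl⟩
      obtain ⟨x', hx', hb⟩ := h.2.2 a ha y' hR
      have hb' : Beq SP SA (j + (j+1)*c) M x' N y' := Beq_mono (by nlinarith) hb
      have hbc : Beq SP SA c M x' N y' := Beq_mono (by nlinarith) hb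
      have hsl' : satList M U a o o' x x' := by
        rw [satList_iff_mem] at hsl ⊢
        obtain ⟨ψ, ψ', hmem, h1, h2⟩ := hsl
        refine ⟨ψ, ψ', hmem, ?_, ?_⟩
        · exact (hsrc _ hmem c (le_trans (bnd_src_le hmem) hc) M x N y hxyc).2 h1
        · exact (htgt _ hmem c (le_trans (bnd_tgt_le hmem) hc) M x' N y' hbc).2 h2
      exact ⟨(x', o'), ⟨hx', hsl'⟩, ih M x' N y' o' hb'⟩

theorem mem_atomsL_src {U : List (Arrow P A)} {ar : Arrow P A} (h : ar ∈ U) :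
    ∀ p ∈ atomsOf ar.2.2.1, p ∈ atomsL U := by
  induction U with
  | nil => cases h
  | cons b rest ih =>
    obtain ⟨a, o1, ψ, o2, ψ'⟩ := b
    rcases List.mem_cons.1 h with rfl | h'
    · intro p hp; simp [atomsL]; tauto
    · intro p hp; have := ih h' p hp; simp [atomsL]; tauto

theorem mem_atomsL_tgt {U : List (Arrow P A)} {ar : Arrow P A} (h : ar ∈ U) :
    ∀ p ∈ atomsOf ar.2.2.2.2, p ∈ atomsL U := by
  induction U with
  | nil => cases h
  | cons b rest ih =>
    obtain ⟨a, o1, ψ, o2, ψ'⟩ := b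
    rcases List.mem_cons.1 h with rfl | h'
    · intro p hp; simp [atomsL]; tauto
    · intro p hp; have := ih h' p hp; simp [atomsL]; tauto

theorem mem_agentsL_src {U : List (Arrow P A)} {ar : Arrow P A} (h : ar ∈ U) :
    ∀ a ∈ agentsOf ar.2.2.1, a ∈ agentsL U := by
  induction U with
  | nil => cases h
  | cons b rest ih =>
    obtain ⟨a, o1, ψ, o2, ψ'⟩ := b
    rcases List.mem_cons.1 h with rfl | h'
    · intro q hq; simp [agentsL]; tauto
    · intro q hq; have := ih h' q hq; simp [agentsL]; tauto

theorem mem_agentsL_tgt {U : List (Arrow P A)} {ar : Arrow P A} (h : ar ∈ U) :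
    ∀ a ∈ agentsOf ar.2.2.2.2, a ∈ agentsL U := by
  induction U with
  | nil => cases h
  | cons b rest ih =>
    obtain ⟨a, o1, ψ, o2, ψ'⟩ := b
    rcases List.mem_cons.1 h with rfl | h'
    · intro q hq; simp [agentsL]; tauto
    · intro q hq; have := ih h' q hq; simp [agentsL]; tauto

/-- Main invariance theorem: `NoQuant` formulas are invariant under bounded equivalence. -/
theorem NoQuant_inv {θ : Form P A} (h : Form.NoQuant θ) (SP : List P) (SA : List A)
    (hP : ∀ p ∈ atomsOf θ, p ∈ SP) (hA : ∀ a ∈ agentsOf θ, a ∈ SA) :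
    InvAt SP SA θ := by
  induction h with
  | atom p =>
    intro k hk M x N y hB
    rw [sat_atom, sat_atom]
    exact Beq_atoms hB p (hP p (by simp [atomsOf]))
  | @neg φ _ ih =>
    intro k hk M x N y hB
    rw [sat_neg, sat_neg]
    have hP' : ∀ p ∈ atomsOf φ, p ∈ SP := fun p hp => hP p (by simpa [atomsOf] using hp)
    have hA' : ∀ a ∈ agentsOf φ, a ∈ SA := fun a ha => hA a (by simpa [agentsOf] using ha)
    exact not_congr (ih hP' hA' k (by simpa [bnd] using hk) M x N y hB)
  | @and φ ψ _ _ ih1 ih2 =>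
    intro k hk M x N y hB
    rw [sat_and, sat_and]
    have h1 := ih1 (fun p hp => hP p (by simp [atomsOf]; tauto))
      (fun a ha => hA a (by simp [agentsOf]; tauto)) k
      (by simp [bnd] at hk; omega) M x N y hB
    have h2 := ih2 (fun p hp => hP p (by simp [atomsOf]; tauto))
      (fun a ha => hA a (by simp [agentsOf]; tauto)) k
      (by simp [bnd] at hk; omega) M x N y hB
    exact and_congr h1 h2
  | @box a φ _ ih =>
    intro k hk M x N y hB
    rw [sat_box, sat_box]
    simp only [bnd] at hk
    obtain ⟨k, rfl⟩ : ∃ k', k = k' + 1 := ⟨k - 1, by omega⟩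
    have ha : a ∈ SA := hA a (by simp [agentsOf])
    have ihφ := ih (fun p hp => hP p (by simpa [atomsOf] using hp))
      (fun b hb => hA b (by simp [agentsOf]; tauto))
    constructor
    · intro hall y' hy'
      obtain ⟨x', hx', hb⟩ := hB.2.2 a ha y' hy'
      exact (ihφ k (by omega) M x' N y' hb).1 (hall x' hx')
    · intro hall x' hx'
      obtain ⟨y', hy', hb⟩ := hB.2.1 a ha x' hx'
      exact (ihφ k (by omega) M x' N y' hb).2 (hall y' hy')
  | @upd U o φ _ _ _ ihφ ihsrc ihtgt =>
    intro k hk M x N y hB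
    rw [sat_upd, sat_upd]
    simp only [bnd] at hk
    have hPφ : ∀ p ∈ atomsOf φ, p ∈ SP := fun p hp => hP p (by simp [atomsOf]; tauto)
    have hAφ : ∀ a ∈ agentsOf φ, a ∈ SA := fun a ha => hA a (by simp [agentsOf]; tauto)
    have hsrc : ∀ ar ∈ U, InvAt SP SA ar.2.2.1 := by
      intro ar hmem
      exact ihsrc ar hmem
        (fun p hp => hP p (by simp [atomsOf]; exact Or.inr (mem_atomsL_src hmem p hp)))
        (fun a ha => hA a (by simp [agentsOf]; exact Or.inr (mem_agentsL_src hmem a ha)))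
    have htgt : ∀ ar ∈ U, InvAt SP SA ar.2.2.2.2 := by
      intro ar hmem
      exact ihtgt ar hmem
        (fun p hp => hP p (by simp [atomsOf]; exact Or.inr (mem_atomsL_tgt hmem p hp)))
        (fun a ha => hA a (by simp [agentsOf]; exact Or.inr (mem_agentsL_tgt hmem a ha)))
    have hprod := Beq_prod (le_refl (bndL U)) hsrc htgt (bnd φ) M x N y
      o (Beq_mono (by omega) hB)
    exact ihφ hPφ hAφ (bnd φ) (le_refl _) _ _ _ _ hprod

end Aux3
section Aux4
open Classical
variable {P A : Type}

attribute [local instance] Classical.propDecidable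

theorem iteb_eq_true {a : Prop} : ((if a then true else false) = true) ↔ a := by
  by_cases h : a <;> simp [h]

theorem iteb_eq_iteb {a b : Prop} :
    ((if a then true else false) = (if b then true else false)) ↔ (a ↔ b) := by
  by_cases h : a <;> by_cases h' : b <;> simp [h, h']

/-- finite space of depth-`k` types over `nP` atoms and `nA` agents. -/
def TS (nP nA : ℕ) : ℕ → Type
  | 0 => Fin nP → Bool
  | k+1 => (Fin nP → Bool) × (Fin nA → TS nP nA k → Bool)

noncomputable instance TS.deq (nP nA : ℕ) : ∀ k, DecidableEq (TS nP nA k)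
  | 0 => inferInstanceAs (DecidableEq (Fin nP → Bool))
  | k+1 =>
      letI := TS.deq nP nA k
      inferInstanceAs (DecidableEq ((Fin nP → Bool) × (Fin nA → TS nP nA k → Bool)))

noncomputable instance TS.fin (nP nA : ℕ) : ∀ k, Fintype (TS nP nA k)
  | 0 => inferInstanceAs (Fintype (Fin nP → Bool))
  | k+1 =>
      letI := TS.fin nP nA k
      letI := TS.deq nP nA k
      inferInstanceAs (Fintype ((Fin nP → Bool) × (Fin nA → TS nP nA k → Bool)))

variable (SP : List P) (SA : List A)

/-- the depth-`k` type of a world. -/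
noncomputable def typeOf (M : KModel P A) : ∀ (k : ℕ), M.World → TS SP.length SA.length k
  | 0, x => fun i => if M.V x (SP.get i) then true else false
  | k+1, x =>
      (fun i => if M.V x (SP.get i) then true else false,
       fun a T => if ∃ y, M.R (SA.get a) x y ∧ typeOf M k y = T then true else false)

theorem typeOf_zero_iff {M N : KModel P A} (x : M.World) (y : N.World) :
    typeOf SP SA M 0 x = typeOf SP SA N 0 y ↔ ∀ p ∈ SP, (M.V x p ↔ N.V y p) := by
  refine funext_iff.trans ?_
  constructor
  · intro h p hp
    obtain ⟨i, rfl⟩ := List.mem_iff_get.1 hp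
    exact iteb_eq_iteb.1 (h i)
  · intro h i
    exact iteb_eq_iteb.2 (h (SP.get i) (SP.get_mem _))

theorem typeOf_succ_iff {M N : KModel P A} (k : ℕ) (x : M.World) (y : N.World) :
    typeOf SP SA M (k+1) x = typeOf SP SA N (k+1) y ↔
      (typeOf SP SA M 0 x = typeOf SP SA N 0 y ∧
       ∀ (i : Fin SA.length) (T : TS SP.length SA.length k),
         ((∃ x', M.R (SA.get i) x x' ∧ typeOf SP SA M k x' = T) ↔
          (∃ y', N.R (SA.get i) y y' ∧ typeOf SP SA N k y' = T))) := by
  rw [show typeOf SP SA M (k+1) x =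
      (typeOf SP SA M 0 x,
       fun a T => if ∃ x', M.R (SA.get a) x x' ∧ typeOf SP SA M k x' = T then true else false)
      from rfl,
    show typeOf SP SA N (k+1) y =
      (typeOf SP SA N 0 y,
       fun a T => if ∃ y', N.R (SA.get a) y y' ∧ typeOf SP SA N k y' = T then true else false)
      from rfl]
  show @Eq (TS SP.length SA.length 0 × (Fin SA.length → TS SP.length SA.length k → Bool)) _ _ ↔ _
  rw [Prod.mk.injEq]
  refine and_congr Iff.rfl ?_
  rw [funext_iff]
  constructor
  · intro h i T
    have := congrFun (h i) T
    exact iteb_eq_iteb.1 this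
  · intro h i
    funext T
    exact iteb_eq_iteb.2 (h i T)

variable (p0 : P)

def taut : Form P A := .neg (.and (.atom p0) (.neg (.atom p0)))

def conjL : List (Form P A) → Form P A
  | [] => taut p0
  | φ :: rest => .and φ (conjL rest)

def disjL (L : List (Form P A)) : Form P A := .neg (conjL p0 (L.map .neg))

theorem msat_taut (M : KModel P A) (x : M.World) : msat M x (taut p0) := by
  rw [taut, msat, msat, msat, msat]; tauto

theorem msat_conjL (M : KModel P A) (x : M.World) (L : List (Form P A)) :
    msat M x (conjL p0 L) ↔ ∀ φ ∈ L, msat M x φ := by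
  induction L with
  | nil => simp [conjL, msat_taut]
  | cons φ rest ih =>
    rw [conjL, msat, ih]
    simp

theorem msat_disjL (M : KModel P A) (x : M.World) (L : List (Form P A)) :
    msat M x (disjL p0 L) ↔ ∃ φ ∈ L, msat M x φ := by
  rw [disjL, msat, msat_conjL]
  simp only [List.mem_map]
  constructor
  · intro h
    by_contra hc
    push_neg at hc
    exact h (by rintro ψ ⟨φ, hφ, rfl⟩; rw [msat]; exact fun hm => hc φ hφ hm)
  · rintro ⟨φ, hφ, hm⟩ hall
    have := hall (.neg φ) ⟨φ, hφ, rfl⟩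
    rw [msat] at this
    exact this hm

theorem Modal_taut : Form.Modal (taut p0 : Form P A) := by
  exact .neg (.and (.atom p0) (.neg (.atom p0)))

theorem Modal_conjL {L : List (Form P A)} (h : ∀ φ ∈ L, Form.Modal φ) :
    Form.Modal (conjL p0 L) := by
  induction L with
  | nil => exact Modal_taut p0
  | cons φ rest ih =>
    exact .and (h φ (by simp)) (ih fun ψ hψ => h ψ (by simp [hψ]))

theorem Modal_disjL {L : List (Form P A)} (h : ∀ φ ∈ L, Form.Modal φ) :
    Form.Modal (disjL p0 L) := by
  refine .neg (Modal_conjL p0 ?_)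
  rintro ψ hψ
  obtain ⟨φ, hφ, rfl⟩ := List.mem_map.1 hψ
  exact .neg (h φ hφ)

/-- all elements of `TS` as a list. -/
noncomputable def allTS (nP nA k : ℕ) : List (TS nP nA k) :=
  (@Finset.univ (TS nP nA k) (TS.fin nP nA k)).toList

theorem mem_allTS (nP nA k : ℕ) (T : TS nP nA k) : T ∈ allTS nP nA k :=
  Finset.mem_toList.2 (@Finset.mem_univ _ (TS.fin nP nA k) T)

/-- characteristic formula of a depth-`k` type. -/
noncomputable def chi : ∀ (k : ℕ), TS SP.length SA.length k → Form P A
  | 0, T => conjL p0 (List.ofFn (fun i =>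
      if T i then Form.atom (SP.get i) else .neg (.atom (SP.get i))))
  | k+1, T =>
      .and (chi 0 T.1)
        (conjL p0 (List.ofFn (fun (a : Fin SA.length) =>
          .and
            (conjL p0 (((allTS SP.length SA.length k).filter (fun S => T.2 a S)).map
              (fun S => Form.dia (SA.get a) (chi k S))))
            (.box (SA.get a) (disjL p0 (((allTS SP.length SA.length k).filter
              (fun S => T.2 a S)).map (chi k)))))))

theorem Modal_chi : ∀ (k : ℕ) (T : TS SP.length SA.length k), Form.Modal (chi SP SA p0 k T)
  | 0, T => by
    rw [chi]
    refine Modal_conjL p0 ?_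
    intro φ hφ
    obtain ⟨i, rfl⟩ := (List.mem_ofFn.1 hφ)
    by_cases h : T i <;> simp [h] <;> first
      | exact .atom _
      | exact .neg (.atom _)
  | k+1, T => by
    rw [chi]
    refine .and (Modal_chi 0 T.1) (Modal_conjL p0 ?_)
    intro φ hφ
    obtain ⟨a, rfl⟩ := (List.mem_ofFn.1 hφ)
    refine .and (Modal_conjL p0 ?_) (.box _ (Modal_disjL p0 ?_))
    · rintro ψ hψ
      obtain ⟨S, hS, rfl⟩ := List.mem_map.1 hψ
      exact .neg (.box _ (.neg (Modal_chi k S)))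
    · rintro ψ hψ
      obtain ⟨S, hS, rfl⟩ := List.mem_map.1 hψ
      exact Modal_chi k S

theorem msat_dia (M : KModel P A) (x : M.World) (a : A) (φ : Form P A) :
    msat M x (Form.dia a φ) ↔ ∃ y, M.R a x y ∧ msat M y φ := by
  rw [Form.dia, msat, msat]
  push_neg
  constructor
  · rintro ⟨t, ht, h2⟩
    exact ⟨t, ht, not_not.1 (by simpa [msat] using h2)⟩
  · rintro ⟨y, hy, hm⟩
    refine ⟨y, hy, ?_⟩
    rw [msat]
    exact not_not.2 hm

theorem chi_sat : ∀ (k : ℕ) (T : TS SP.length SA.length k) (M : KModel P A) (x : M.World),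
    msat M x (chi SP SA p0 k T) ↔ typeOf SP SA M k x = T
  | 0, T, M, x => by
    rw [chi, msat_conjL]
    rw [show typeOf SP SA M 0 x = fun i => if M.V x (SP.get i) then true else false from rfl]
    refine Iff.trans ?_ funext_iff.symm
    constructor
    · intro h i
      have hm := h _ (List.mem_ofFn.2 ⟨i, rfl⟩)
      beta_reduce at hm
      by_cases hT : T i = true
      · rw [hT, iteb_eq_true]
        simp only [hT, if_true] at hm
        rw [msat] at hm
        exact hm
      · have hT' : T i = false := by simpa using hT
        rw [hT']
        simp [hT'] at hm
        rw [msat, msat] at hm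
        by_cases hv : M.V x (SP.get i)
        · exact absurd hv hm
        · rw [if_neg hv]
    · intro h φ hφ
      obtain ⟨i, rfl⟩ := List.mem_ofFn.1 hφ
      have hi := h i
      beta_reduce
      by_cases hT : T i = true
      · simp only [hT, if_true]
        rw [hT, iteb_eq_true] at hi
        rw [msat]; exact hi
      · have hT' : T i = false := by simpa using hT
        simp [hT']
        rw [msat, msat]
        rw [hT'] at hi
        intro hv
        simp [hv] at hi
  | k+1, T, M, x => by
    rw [chi, msat, msat_conjL]
    have hfst : msat M x (chi SP SA p0 0 T.1) ↔ typeOf SP SA M 0 x = T.1 :=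
      chi_sat 0 T.1 M x
    have hsnd : (∀ φ ∈ List.ofFn (fun (a : Fin SA.length) =>
          Form.and
            (conjL p0 (((allTS SP.length SA.length k).filter (fun S => T.2 a S)).map
              (fun S => Form.dia (SA.get a) (chi SP SA p0 k S))))
            (.box (SA.get a) (disjL p0 (((allTS SP.length SA.length k).filter
              (fun S => T.2 a S)).map (chi SP SA p0 k))))), msat M x φ) ↔
        ∀ (a : Fin SA.length) (S : TS SP.length SA.length k),
          (if ∃ y, M.R (SA.get a) x y ∧ typeOf SP SA M k y = S then true else false)
            = T.2 a S := by
      constructor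
      · intro h a S
        have hm := h _ (List.mem_ofFn.2 ⟨a, rfl⟩)
        beta_reduce at hm
        rw [msat, msat_conjL, msat] at hm
        obtain ⟨hdia, hbox⟩ := hm
        by_cases hT : T.2 a S = true
        · rw [hT, iteb_eq_true]
          have := hdia _ (List.mem_map.2 ⟨S, List.mem_filter.2 ⟨mem_allTS _ _ _ _, hT⟩, rfl⟩)
          rw [msat_dia] at this
          obtain ⟨y, hy, hc⟩ := this
          exact ⟨y, hy, (chi_sat k S M y).1 hc⟩
        · have hT' : T.2 a S = false := by simpa using hT
          rw [hT']
          by_cases he : ∃ y, M.R (SA.get a) x y ∧ typeOf SP SA M k y = S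
          · obtain ⟨y, hy, hty⟩ := he
            have hb := hbox y hy
            rw [msat_disjL] at hb
            obtain ⟨φ, hφ, hmφ⟩ := hb
            obtain ⟨S', hS', rfl⟩ := List.mem_map.1 hφ
            have hty' := (chi_sat k S' M y).1 hmφ
            have hSS : S' = S := by rw [← hty, ← hty']
            rw [hSS] at hS'
            have hmem := (List.mem_filter.1 hS').2
            rw [hT'] at hmem
            cases hmem
          · rw [if_neg he]
      · intro h φ hφ
        obtain ⟨a, rfl⟩ := List.mem_ofFn.1 hφ
        beta_reduce
        rw [msat, msat_conjL, msat]
        constructor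
        · intro ψ hψ
          obtain ⟨S, hS, rfl⟩ := List.mem_map.1 hψ
          have hT := (List.mem_filter.1 hS).2
          have hiS := h a S
          rw [hT, iteb_eq_true] at hiS
          obtain ⟨y, hy, hty⟩ := hiS
          rw [msat_dia]
          exact ⟨y, hy, (chi_sat k S M y).2 hty⟩
        · intro y hy
          rw [msat_disjL]
          have hiS := h a (typeOf SP SA M k y)
          have htrue : T.2 a (typeOf SP SA M k y) = true := by
            rw [← hiS, iteb_eq_true]; exact ⟨y, hy, rfl⟩
          exact ⟨chi SP SA p0 k (typeOf SP SA M k y),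
            List.mem_map.2 ⟨_, List.mem_filter.2 ⟨mem_allTS _ _ _ _, htrue⟩, rfl⟩,
            (chi_sat k _ M y).2 rfl⟩
    rw [show typeOf SP SA M (k+1) x =
      (typeOf SP SA M 0 x,
       fun a S => if ∃ y, M.R (SA.get a) x y ∧ typeOf SP SA M k y = S then true else false)
      from rfl]
    change _ ↔ @Eq (TS SP.length SA.length 0 × (Fin SA.length → TS SP.length SA.length k → Bool)) _ T
    refine Iff.trans ?_ Prod.ext_iff.symm
    refine and_congr hfst ?_
    rw [hsnd]
    constructor
    · intro h; funext a S; exact h a S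
    · intro h a S; exact congrFun (congrFun h a) S
  termination_by k => k
  decreasing_by all_goals omega

end Aux4
section Synth
open Classical
variable {P A : Type}

attribute [local instance] Classical.propDecidable

theorem ite_some_eq {α : Type*} {c : Prop} [Decidable c] {e x : α} :
    ((if c then some e else none) = some x) ↔ (c ∧ e = x) := by
  by_cases h : c <;> simp [h]

/-- joint type space: depth-`k` M-type together with recursive N-successor structure. -/
def JS (nP nA : ℕ) : ℕ → Type
  | 0 => TS nP nA 0
  | k+1 => TS nP nA (k+1) × (Fin nA → JS nP nA k → Bool)

noncomputable instance JS.deq (nP nA : ℕ) : ∀ k, DecidableEq (JS nP nA k)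
  | 0 => TS.deq nP nA 0
  | k+1 =>
      letI := JS.deq nP nA k
      inferInstanceAs (DecidableEq (TS nP nA (k+1) × (Fin nA → JS nP nA k → Bool)))

noncomputable instance JS.fin (nP nA : ℕ) : ∀ k, Fintype (JS nP nA k)
  | 0 => TS.fin nP nA 0
  | k+1 =>
      letI := JS.fin nP nA k
      letI := JS.deq nP nA k
      letI := TS.fin nP nA (k+1)
      inferInstanceAs (Fintype (TS nP nA (k+1) × (Fin nA → JS nP nA k → Bool)))

def JS.toTS (nP nA : ℕ) : ∀ k, JS nP nA k → TS nP nA k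
  | 0, j => j
  | _+1, j => j.1

noncomputable def allJS (nP nA k : ℕ) : List (JS nP nA k) :=
  (@Finset.univ (JS nP nA k) (JS.fin nP nA k)).toList

theorem mem_allJS (nP nA k : ℕ) (j : JS nP nA k) : j ∈ allJS nP nA k :=
  Finset.mem_toList.2 (@Finset.mem_univ _ (JS.fin nP nA k) j)

noncomputable def rankJS (nP nA k : ℕ) (j : JS nP nA k) : ℕ :=
  (@Fintype.equivFin (JS nP nA k) (JS.fin nP nA k) j).val

theorem rankJS_inj {nP nA k : ℕ} {j j' : JS nP nA k}
    (h : rankJS nP nA k j = rankJS nP nA k j') : j = j' :=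
  (@Fintype.equivFin (JS nP nA k) (JS.fin nP nA k)).injective (Fin.ext h)

/-- outcome code of a depth-`k` joint type, in a synthesis of total depth `d`. -/
noncomputable def codeO (nP nA d k : ℕ) (j : JS nP nA k) : ℕ :=
  Nat.pair (d - k) (rankJS nP nA k j)

variable (SP : List P) (SA : List A)

/-- the joint type of a world of `N` (relative to projection `π` to `M`). -/
noncomputable def JT (M N : KModel P A) (π : N.World → M.World) :
    ∀ (k : ℕ), N.World → JS SP.length SA.length k
  | 0, n => typeOf SP SA M 0 (π n)
  | k+1, n =>
      (typeOf SP SA M (k+1) (π n),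
       fun a j => if ∃ n', N.R (SA.get a) n n' ∧ JT M N π k n' = j then true else false)

theorem JT_toTS (M N : KModel P A) (π : N.World → M.World) :
    ∀ k n, JS.toTS _ _ k (JT SP SA M N π k n) = typeOf SP SA M k (π n)
  | 0, _ => rfl
  | _+1, _ => rfl

theorem typeOf_fst_zero {M N : KModel P A} {k : ℕ} {x : M.World} {y : N.World}
    (h : typeOf SP SA M k x = typeOf SP SA N k y) :
    typeOf SP SA M 0 x = typeOf SP SA N 0 y := by
  cases k with
  | zero => exact h
  | succ k => exact congrArg Prod.fst h

/-- the synthesized arrow update model. -/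
noncomputable def synthV (M N : KModel P A) (π : N.World → M.World) (p0 : P) (d : ℕ) :
    List (Arrow P A) :=
  (List.range d).flatMap (fun rm =>
    (List.finRange SA.length).flatMap (fun a =>
      (allJS SP.length SA.length (rm+1)).flatMap (fun J =>
        (allJS SP.length SA.length rm).filterMap (fun J' =>
          if ∃ m m', N.R (SA.get a) m m' ∧ JT SP SA M N π (rm+1) m = J ∧
              JT SP SA M N π rm m' = J'
          then some (SA.get a, codeO SP.length SA.length d (rm+1) J,
                     chi SP SA p0 (rm+1) (JS.toTS _ _ _ J),
                     codeO SP.length SA.length d rm J',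
                     chi SP SA p0 rm (JS.toTS _ _ _ J'))
          else none))))

theorem mem_synthV_iff {M N : KModel P A} {π : N.World → M.World} {p0 : P} {d : ℕ}
    {ar : Arrow P A} :
    ar ∈ synthV SP SA M N π p0 d ↔
    ∃ rm, rm < d ∧ ∃ (a : Fin SA.length) (J : JS SP.length SA.length (rm+1))
      (J' : JS SP.length SA.length rm),
      (∃ m m', N.R (SA.get a) m m' ∧ JT SP SA M N π (rm+1) m = J ∧
        JT SP SA M N π rm m' = J') ∧
      ar = (SA.get a, codeO SP.length SA.length d (rm+1) J,
            chi SP SA p0 (rm+1) (JS.toTS _ _ _ J),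
            codeO SP.length SA.length d rm J',
            chi SP SA p0 rm (JS.toTS _ _ _ J')) := by
  rw [synthV]
  constructor
  · intro h
    obtain ⟨rm, hrm, h⟩ := List.mem_flatMap.1 h
    obtain ⟨a, _, h⟩ := List.mem_flatMap.1 h
    obtain ⟨J, _, h⟩ := List.mem_flatMap.1 h
    obtain ⟨J', _, h⟩ := List.mem_filterMap.1 h
    obtain ⟨hc, he⟩ := ite_some_eq.1 h
    exact ⟨rm, List.mem_range.1 hrm, a, J, J', hc, he.symm⟩
  · rintro ⟨rm, hrm, a, J, J', hc, rfl⟩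
    refine List.mem_flatMap.2 ⟨rm, List.mem_range.2 hrm, ?_⟩
    refine List.mem_flatMap.2 ⟨a, List.mem_finRange a, ?_⟩
    refine List.mem_flatMap.2 ⟨J, mem_allJS _ _ _ J, ?_⟩
    exact List.mem_filterMap.2 ⟨J', mem_allJS _ _ _ J', ite_some_eq.2 ⟨hc, rfl⟩⟩

theorem ModalArrows_synthV {M N : KModel P A} {π : N.World → M.World} {p0 : P} {d : ℕ} :
    ModalArrows (synthV SP SA M N π p0 d) := by
  intro ar har
  obtain ⟨rm, _, a, J, J', _, rfl⟩ := (mem_synthV_iff SP SA).1 har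
  exact ⟨Modal_chi SP SA p0 _ _, Modal_chi SP SA p0 _ _⟩

theorem synth_claim (M N : KModel P A) (π : N.World → M.World)
    (hV : ∀ n p, N.V n p ↔ M.V (π n) p)
    (hR : ∀ a x y, N.R a x y → M.R a (π x) (π y)) (p0 : P) (d : ℕ) :
    ∀ (r : ℕ) (w : M.World) (n : N.World), r ≤ d →
      typeOf SP SA M r w = typeOf SP SA M r (π n) →
      Beq SP SA r (prodA M (synthV SP SA M N π p0 d))
        (w, codeO SP.length SA.length d r (JT SP SA M N π r n)) N n := by
  intro r
  induction r with
  | zero =>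
    intro w n _ hty
    intro p hp
    have h0 := (typeOf_zero_iff SP SA w (π n)).1 hty p hp
    exact h0.trans (hV n p).symm
  | succ r ih =>
    intro w n hrd hty
    have hatoms : ∀ p ∈ SP,
        ((prodA M (synthV SP SA M N π p0 d)).V
          (w, codeO SP.length SA.length d (r+1) (JT SP SA M N π (r+1) n)) p ↔ N.V n p) := by
      intro p hp
      have h0 := (typeOf_zero_iff SP SA w (π n)).1 (typeOf_fst_zero SP SA hty) p hp
      exact h0.trans (hV n p).symm
    refine ⟨hatoms, ?_, ?_⟩
    · -- forth
      rintro a ha ⟨w', c'⟩ ⟨hRw, hmo⟩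
      obtain ⟨ψ, ψ', hmem, hms, hms'⟩ := hmo
      obtain ⟨rm, hrmd, i, J, J', ⟨m, m', hedge, hJm, hJm'⟩, heq⟩ :=
        (mem_synthV_iff SP SA).1 hmem
      obtain ⟨ha1, ha2, ha3, ha4, ha5⟩ : SA.get i = a ∧
          codeO SP.length SA.length d (rm+1) J =
            codeO SP.length SA.length d (r+1) (JT SP SA M N π (r+1) n) ∧
          chi SP SA p0 (rm+1) (JS.toTS _ _ _ J) = ψ ∧
          codeO SP.length SA.length d rm J' = c' ∧
          chi SP SA p0 rm (JS.toTS _ _ _ J') = ψ' := by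
        have h1 := congrArg Prod.fst heq
        have h2 := congrArg (Prod.fst ∘ Prod.snd) heq
        have h3 := congrArg (Prod.fst ∘ Prod.snd ∘ Prod.snd) heq
        have h4 := congrArg (Prod.fst ∘ Prod.snd ∘ Prod.snd ∘ Prod.snd) heq
        have h5 := congrArg (Prod.snd ∘ Prod.snd ∘ Prod.snd ∘ Prod.snd) heq
        exact ⟨h1.symm, h2.symm, h3.symm, h4.symm, h5.symm⟩
      -- from the outcome equality, rm = r and J = JT (r+1) n
      have hpair := ha2
      rw [codeO, codeO, Nat.pair_eq_pair] at hpair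
      have hrmr : rm = r := by omega
      subst hrmr
      have hJ : J = JT SP SA M N π (rm+1) n := rankJS_inj hpair.2
      subst hJ
      -- the witness edge m → m' transfers to an edge from n
      have hsnd := congrArg Prod.snd hJm
      rw [show (JT SP SA M N π (rm+1) n).2 =
        (fun a j => if ∃ n', N.R (SA.get a) n n' ∧ JT SP SA M N π rm n' = j
          then true else false) from rfl] at hsnd
      have hiff := iteb_eq_iteb.1 (congrFun (congrFun hsnd i) (JT SP SA M N π rm m'))
      obtain ⟨n', hn', hJn'⟩ := hiff.1 ⟨m', hedge, rfl⟩
      -- the target condition pins down the type of w'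
      have hw' : typeOf SP SA M rm w' = typeOf SP SA M rm (π n') := by
        rw [← ha5] at hms'
        have h1 := (chi_sat SP SA p0 rm (JS.toTS _ _ _ J') M w').1 hms'
        have h2 : typeOf SP SA M rm (π n') = typeOf SP SA M rm (π m') := by
          rw [← JT_toTS SP SA M N π rm n', ← JT_toTS SP SA M N π rm m', hJn']
        rw [h1, ← hJm', JT_toTS, h2]
      have hbeq := ih w' n' (by omega) hw'
      rw [ha1] at hn'
      refine ⟨n', hn', ?_⟩
      have hc' : c' = codeO SP.length SA.length d rm (JT SP SA M N π rm n') := by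
        rw [hJn', hJm', ha4]
      rw [← hc'] at hbeq
      exact hbeq
    · -- back
      rintro a ha n' hn'
      obtain ⟨i, hi⟩ := List.mem_iff_get.1 ha
      -- find a matching M-successor of w
      have hsucc := (typeOf_succ_iff SP SA r w (π n)).1 hty
      obtain ⟨w', hRw', htw'⟩ := (hsucc.2 i (typeOf SP SA M r (π n'))).2
        ⟨π n', by rw [hi]; exact hR a n n' hn', rfl⟩
      -- the arrow corresponding to the edge n → n'
      have hmem : (SA.get i, codeO SP.length SA.length d (r+1) (JT SP SA M N π (r+1) n),
          chi SP SA p0 (r+1) (JS.toTS _ _ _ (JT SP SA M N π (r+1) n)),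
          codeO SP.length SA.length d r (JT SP SA M N π r n'),
          chi SP SA p0 r (JS.toTS _ _ _ (JT SP SA M N π r n'))) ∈
          synthV SP SA M N π p0 d := by
        refine (mem_synthV_iff SP SA).2 ⟨r, by omega, i, JT SP SA M N π (r+1) n,
          JT SP SA M N π r n', ⟨n, n', by rw [hi]; exact hn', rfl, rfl⟩, rfl⟩
      rw [hi] at hRw'
      refine ⟨(w', codeO SP.length SA.length d r (JT SP SA M N π r n')), ⟨hRw', ?_⟩, ?_⟩
      · refine ⟨_, _, by rw [← hi]; exact hmem, ?_, ?_⟩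
        · rw [JT_toTS]
          exact (chi_sat SP SA p0 (r+1) _ M w).2 hty
        · rw [JT_toTS]
          exact (chi_sat SP SA p0 r _ M w').2 htw'
      · exact ih w' n' (by omega) htw'

theorem Pstar {φ : Form P A} (h : Form.NoQuant φ) (M : KModel P A)
    (U : List (Arrow P A)) (o : ℕ) (s : M.World)
    (hsat : Form.sat (prodModel M U) (s, o) φ) : Form.sat M s (Form.ex φ) := by
  classical
  set N := prodModel M U with hN
  have hclaim := synth_claim (atomsOf φ) (agentsOf φ) M N Prod.fst
    (fun n p => Iff.rfl) (fun a x y hxy => hxy.1) (getAtom φ) (bnd φ) (bnd φ)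
    s (s, o) le_rfl rfl
  rw [sat_ex]
  refine ⟨synthV (atomsOf φ) (agentsOf φ) M N Prod.fst (getAtom φ) (bnd φ),
    codeO (atomsOf φ).length (agentsOf φ).length (bnd φ) (bnd φ)
      (JT (atomsOf φ) (agentsOf φ) M N Prod.fst (bnd φ) (s, o)),
    ModalArrows_synthV _ _, ?_⟩
  exact (NoQuant_inv h (atomsOf φ) (agentsOf φ) (fun p hp => hp) (fun a ha => ha)
    (bnd φ) le_rfl _ _ _ _ hclaim).2 hsat

end Synth
section Main
open Classical
variable {P A : Type}

theorem mem_shiftArrows {f : ℕ → ℕ} {U : List (Arrow P A)} {ar : Arrow P A} :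
    ar ∈ shiftArrows f U ↔
      ∃ b ∈ U, ar = (b.1, f b.2.1, b.2.2.1, f b.2.2.2.1, b.2.2.2.2) := by
  rw [shiftArrows, List.mem_map]
  constructor
  · rintro ⟨b, hb, rfl⟩; exact ⟨b, hb, rfl⟩
  · rintro ⟨b, hb, rfl⟩; exact ⟨b, hb, rfl⟩

theorem mem_combineU {U1 U2 : List (Arrow P A)} {o1 o2 : ℕ} {φ1 : Form P A}
    {ar : Arrow P A} :
    ar ∈ combineU U1 U2 o1 o2 φ1 ↔
      (ar ∈ shiftArrows (fun k => 3*k+1) U1 ∨ ar ∈ shiftArrows (fun k => 3*k+2) U2 ∨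
       ar ∈ (U1.filter (fun b => b.2.1 == o1)).map (fun b =>
         (b.1, 0, Form.and b.2.2.1 (Form.diaUpd U1 o1 φ1), 3*b.2.2.2.1+1, b.2.2.2.2)) ∨
       ar ∈ (U2.filter (fun b => b.2.1 == o2)).map (fun b =>
         (b.1, 0, Form.and b.2.2.1 (Form.neg (Form.diaUpd U1 o1 φ1)),
           3*b.2.2.2.1+2, b.2.2.2.2))) := by
  rw [combineU]
  simp only [List.mem_append]
  tauto

theorem bisim1 (M : KModel P A) (U1 U2 : List (Arrow P A)) (o1 o2 : ℕ) (φ1 : Form P A)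
    (s : M.World) (hδ : Form.sat M s (Form.diaUpd U1 o1 φ1)) :
    IsBisim (prodModel M U1) (prodModel M (combineU U1 U2 o1 o2 φ1))
      (fun x y => x.1 = y.1 ∧ (y.2 = 3*x.2+1 ∨ (x = (s, o1) ∧ y.2 = 0))) := by
  rintro ⟨t, k⟩ ⟨t', k'⟩ ⟨hteq, hcase⟩
  dsimp only at hteq
  subst hteq
  refine ⟨fun p => Iff.rfl, ?_, ?_⟩
  · -- forth
    rintro a ⟨u, m⟩ ⟨hRa, hsl⟩
    rw [satList_iff_mem] at hsl
    obtain ⟨ψ, ψ', hmem, h1, h2⟩ := hsl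
    rcases hcase with hk' | ⟨hxy, hk'⟩
    · subst hk'
      refine ⟨(u, 3*m+1), ⟨hRa, ?_⟩, rfl, Or.inl rfl⟩
      rw [satList_iff_mem]
      exact ⟨ψ, ψ', mem_combineU.2 (Or.inl (mem_shiftArrows.2 ⟨(a,k,ψ,m,ψ'), hmem, rfl⟩)),
        h1, h2⟩
    · injection hxy with het hek
      have het2 : s = t := het.symm
      have hek2 : o1 = k := hek.symm
      subst het2; subst hek2; subst hk'
      refine ⟨(u, 3*m+1), ⟨hRa, ?_⟩, rfl, Or.inl rfl⟩
      rw [satList_iff_mem]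
      refine ⟨Form.and ψ (Form.diaUpd U1 o1 φ1), ψ', ?_, ?_, h2⟩
      · refine mem_combineU.2 (Or.inr (Or.inr (Or.inl ?_)))
        exact List.mem_map.2 ⟨(a, o1, ψ, m, ψ'),
          List.mem_filter.2 ⟨hmem, by simp⟩, rfl⟩
      · rw [sat_and]; exact ⟨h1, hδ⟩
  · -- back
    rintro a ⟨v, m'⟩ ⟨hRa, hsl⟩
    rw [satList_iff_mem] at hsl
    obtain ⟨ψ, ψ', hmem, h1, h2⟩ := hsl
    rcases hcase with hk' | ⟨hxy, hk'⟩
    · subst hk'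
      rcases mem_combineU.1 hmem with hm | hm | hm | hm
      · obtain ⟨⟨b1, b2, b3, b4, b5⟩, hb, heq⟩ := mem_shiftArrows.1 hm
        simp only [Prod.mk.injEq] at heq
        obtain ⟨e1, e2, e3, e4, e5⟩ := heq
        have hkb : k = b2 := by omega
        refine ⟨(v, b4), ⟨hRa, ?_⟩, rfl, Or.inl e4⟩
        rw [satList_iff_mem]
        refine ⟨b3, b5, ?_, e3 ▸ h1, e5 ▸ h2⟩
        rw [e1, hkb]
        exact hb
      · obtain ⟨⟨b1, b2, b3, b4, b5⟩, hb, heq⟩ := mem_shiftArrows.1 hm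
        simp only [Prod.mk.injEq] at heq
        omega
      · obtain ⟨⟨b1, b2, b3, b4, b5⟩, hb, heq⟩ := List.mem_map.1 hm
        simp only [Prod.mk.injEq] at heq
        omega
      · obtain ⟨⟨b1, b2, b3, b4, b5⟩, hb, heq⟩ := List.mem_map.1 hm
        simp only [Prod.mk.injEq] at heq
        omega
    · injection hxy with het hek
      have het2 : s = t := het.symm
      have hek2 : o1 = k := hek.symm
      subst het2; subst hek2; subst hk'
      rcases mem_combineU.1 hmem with hm | hm | hm | hm
      · obtain ⟨⟨b1, b2, b3, b4, b5⟩, hb, heq⟩ := mem_shiftArrows.1 hm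
        simp only [Prod.mk.injEq] at heq
        omega
      · obtain ⟨⟨b1, b2, b3, b4, b5⟩, hb, heq⟩ := mem_shiftArrows.1 hm
        simp only [Prod.mk.injEq] at heq
        omega
      · obtain ⟨⟨b1, b2, b3, b4, b5⟩, hbf, heq⟩ := List.mem_map.1 hm
        obtain ⟨hb, hbo⟩ := List.mem_filter.1 hbf
        have hbo1 : b2 = o1 := by simpa using hbo
        simp only [Prod.mk.injEq] at heq
        obtain ⟨e1, e2, e3, e4, e5⟩ := heq
        rw [← e3] at h1
        rw [sat_and] at h1
        refine ⟨(v, b4), ⟨hRa, ?_⟩, rfl, Or.inl e4.symm⟩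
        rw [satList_iff_mem]
        refine ⟨b3, b5, ?_, h1.1, by rw [e5]; exact h2⟩
        rw [← e1]
        rw [hbo1] at hb
        exact hb
      · obtain ⟨⟨b1, b2, b3, b4, b5⟩, hbf, heq⟩ := List.mem_map.1 hm
        simp only [Prod.mk.injEq] at heq
        obtain ⟨e1, e2, e3, e4, e5⟩ := heq
        exfalso
        rw [← e3] at h1
        rw [sat_and, sat_neg] at h1
        exact h1.2 hδ

theorem bisim2 (M : KModel P A) (U1 U2 : List (Arrow P A)) (o1 o2 : ℕ) (φ1 : Form P A)
    (s : M.World) (hδ : ¬ Form.sat M s (Form.diaUpd U1 o1 φ1)) :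
    IsBisim (prodModel M U2) (prodModel M (combineU U1 U2 o1 o2 φ1))
      (fun x y => x.1 = y.1 ∧ (y.2 = 3*x.2+2 ∨ (x = (s, o2) ∧ y.2 = 0))) := by
  rintro ⟨t, k⟩ ⟨t', k'⟩ ⟨hteq, hcase⟩
  dsimp only at hteq
  subst hteq
  refine ⟨fun p => Iff.rfl, ?_, ?_⟩
  · -- forth
    rintro a ⟨u, m⟩ ⟨hRa, hsl⟩
    rw [satList_iff_mem] at hsl
    obtain ⟨ψ, ψ', hmem, h1, h2⟩ := hsl
    rcases hcase with hk' | ⟨hxy, hk'⟩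
    · subst hk'
      refine ⟨(u, 3*m+2), ⟨hRa, ?_⟩, rfl, Or.inl rfl⟩
      rw [satList_iff_mem]
      exact ⟨ψ, ψ', mem_combineU.2 (Or.inr (Or.inl
        (mem_shiftArrows.2 ⟨(a,k,ψ,m,ψ'), hmem, rfl⟩))), h1, h2⟩
    · injection hxy with het hek
      have het2 : s = t := het.symm
      have hek2 : o2 = k := hek.symm
      subst het2; subst hek2; subst hk'
      refine ⟨(u, 3*m+2), ⟨hRa, ?_⟩, rfl, Or.inl rfl⟩
      rw [satList_iff_mem]
      refine ⟨Form.and ψ (Form.neg (Form.diaUpd U1 o1 φ1)), ψ', ?_, ?_, h2⟩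
      · refine mem_combineU.2 (Or.inr (Or.inr (Or.inr ?_)))
        exact List.mem_map.2 ⟨(a, o2, ψ, m, ψ'),
          List.mem_filter.2 ⟨hmem, by simp⟩, rfl⟩
      · rw [sat_and, sat_neg]; exact ⟨h1, hδ⟩
  · -- back
    rintro a ⟨v, m'⟩ ⟨hRa, hsl⟩
    rw [satList_iff_mem] at hsl
    obtain ⟨ψ, ψ', hmem, h1, h2⟩ := hsl
    rcases hcase with hk' | ⟨hxy, hk'⟩
    · subst hk'
      rcases mem_combineU.1 hmem with hm | hm | hm | hm
      · obtain ⟨⟨b1, b2, b3, b4, b5⟩, hb, heq⟩ := mem_shiftArrows.1 hm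
        simp only [Prod.mk.injEq] at heq
        omega
      · obtain ⟨⟨b1, b2, b3, b4, b5⟩, hb, heq⟩ := mem_shiftArrows.1 hm
        simp only [Prod.mk.injEq] at heq
        obtain ⟨e1, e2, e3, e4, e5⟩ := heq
        have hkb : k = b2 := by omega
        refine ⟨(v, b4), ⟨hRa, ?_⟩, rfl, Or.inl e4⟩
        rw [satList_iff_mem]
        refine ⟨b3, b5, ?_, e3 ▸ h1, e5 ▸ h2⟩
        rw [e1, hkb]
        exact hb
      · obtain ⟨⟨b1, b2, b3, b4, b5⟩, hb, heq⟩ := List.mem_map.1 hm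
        simp only [Prod.mk.injEq] at heq
        omega
      · obtain ⟨⟨b1, b2, b3, b4, b5⟩, hb, heq⟩ := List.mem_map.1 hm
        simp only [Prod.mk.injEq] at heq
        omega
    · injection hxy with het hek
      have het2 : s = t := het.symm
      have hek2 : o2 = k := hek.symm
      subst het2; subst hek2; subst hk'
      rcases mem_combineU.1 hmem with hm | hm | hm | hm
      · obtain ⟨⟨b1, b2, b3, b4, b5⟩, hb, heq⟩ := mem_shiftArrows.1 hm
        simp only [Prod.mk.injEq] at heq
        omega
      · obtain ⟨⟨b1, b2, b3, b4, b5⟩, hb, heq⟩ := mem_shiftArrows.1 hm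
        simp only [Prod.mk.injEq] at heq
        omega
      · obtain ⟨⟨b1, b2, b3, b4, b5⟩, hbf, heq⟩ := List.mem_map.1 hm
        simp only [Prod.mk.injEq] at heq
        obtain ⟨e1, e2, e3, e4, e5⟩ := heq
        exfalso
        rw [← e3] at h1
        rw [sat_and] at h1
        exact hδ h1.2
      · obtain ⟨⟨b1, b2, b3, b4, b5⟩, hbf, heq⟩ := List.mem_map.1 hm
        obtain ⟨hb, hbo⟩ := List.mem_filter.1 hbf
        have hbo2 : b2 = o2 := by simpa using hbo
        simp only [Prod.mk.injEq] at heq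
        obtain ⟨e1, e2, e3, e4, e5⟩ := heq
        rw [← e3] at h1
        rw [sat_and] at h1
        refine ⟨(v, b4), ⟨hRa, ?_⟩, rfl, Or.inl e4.symm⟩
        rw [satList_iff_mem]
        refine ⟨b3, b5, ?_, h1.1, by rw [e5]; exact h2⟩
        rw [← e1]
        rw [hbo2] at hb
        exact hb

/-- transfer of `NoQuant` truths along a bisimulation. -/
theorem bisim_transfer {M N : KModel P A} {Z : M.World → N.World → Prop}
    (hZ : IsBisim M N Z) {x : M.World} {y : N.World} (hxy : Z x y)
    {θ : Form P A} (hθ : Form.NoQuant θ) :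
    Form.sat M x θ ↔ Form.sat N y θ :=
  NoQuant_inv hθ (atomsOf θ) (agentsOf θ) (fun _ hp => hp) (fun _ ha => ha)
    (bnd θ) le_rfl M x N y (bisim_Beq hZ (atomsOf θ) (agentsOf θ) (bnd θ) x y hxy)

end Main
/-- disjunction synthesis combination: if `⊨ ⟨↑⟩φᵢ ↔ ⟨Uᵢ,oᵢ⟩φᵢ` for
`i = 1,2` then `⊨ ⟨↑⟩(φ₁∨φ₂) ↔ ⟨U,o⟩(φ₁∨φ₂)` for the combined arrow update model
`U` with fresh point `o = 0`. -/
theorem disjunction_combination (P A : Type) (φ1 φ2 : Form P A)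
    (h1 : φ1.NoQuant) (h2 : φ2.NoQuant)
    (U1 U2 : List (Arrow P A)) (o1 o2 : ℕ)
    (hU1 : ∀ (M : KModel P A) (s : M.World),
      Form.sat M s (Form.ex φ1) ↔ Form.sat M s (Form.diaUpd U1 o1 φ1))
    (hU2 : ∀ (M : KModel P A) (s : M.World),
      Form.sat M s (Form.ex φ2) ↔ Form.sat M s (Form.diaUpd U2 o2 φ2)) :
    ∀ (M : KModel P A) (s : M.World),
      Form.sat M s (Form.ex (Form.or φ1 φ2)) ↔
        Form.sat M s (Form.diaUpd (combineU U1 U2 o1 o2 φ1) 0 (Form.or φ1 φ2)) := by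
  intro M s
  have hor : Form.NoQuant (Form.or φ1 φ2) :=
    Form.NoQuant.neg (Form.NoQuant.and (Form.NoQuant.neg h1) (Form.NoQuant.neg h2))
  constructor
  · intro hex
    rw [sat_ex] at hex
    obtain ⟨V, o, hMV, hsat⟩ := hex
    replace hsat := (sat_or _ _ _ _).1 hsat
    rw [sat_diaUpd]
    by_cases hδ : Form.sat M s (Form.diaUpd U1 o1 φ1)
    · have hδ1 : Form.sat (prodModel M U1) (s, o1) φ1 := (sat_diaUpd M s U1 o1 φ1).1 hδ
      have tr := bisim_transfer (bisim1 M U1 U2 o1 o2 φ1 s hδ)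
        (x := ((s : M.World), o1)) (y := ((s : M.World), 0)) ⟨rfl, Or.inr ⟨rfl, rfl⟩⟩ hor
      exact tr.1 ((sat_or _ _ _ _).2 (Or.inl hδ1))
    · rcases hsat with hs1 | hs2
      · exact absurd ((hU1 M s).1 (by rw [sat_ex]; exact ⟨V, o, hMV, hs1⟩)) hδ
      · have hδ2 : Form.sat (prodModel M U2) (s, o2) φ2 :=
          (sat_diaUpd M s U2 o2 φ2).1 ((hU2 M s).1 (by rw [sat_ex]; exact ⟨V, o, hMV, hs2⟩))
        have tr := bisim_transfer (bisim2 M U1 U2 o1 o2 φ1 s hδ)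
          (x := ((s : M.World), o2)) (y := ((s : M.World), 0)) ⟨rfl, Or.inr ⟨rfl, rfl⟩⟩ hor
        exact tr.1 ((sat_or _ _ _ _).2 (Or.inr hδ2))
  · intro hrhs
    rw [sat_diaUpd] at hrhs
    by_cases hδ : Form.sat M s (Form.diaUpd U1 o1 φ1)
    · have hex1 := (hU1 M s).2 hδ
      rw [sat_ex] at hex1
      obtain ⟨V, o, hMV, hs1⟩ := hex1
      rw [sat_ex]
      exact ⟨V, o, hMV, (sat_or _ _ _ _).2 (Or.inl hs1)⟩
    · have tr := bisim_transfer (bisim2 M U1 U2 o1 o2 φ1 s hδ)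
        (x := ((s : M.World), o2)) (y := ((s : M.World), 0)) ⟨rfl, Or.inr ⟨rfl, rfl⟩⟩ hor
      have h2' := tr.2 hrhs
      replace h2' := (sat_or _ _ _ _).1 h2'
      rcases h2' with hs1 | hs2
      · exact absurd ((hU1 M s).1 (Pstar h1 M U2 o2 s hs1)) hδ
      · have hex2 := (hU2 M s).2 (by rw [sat_diaUpd]; exact hs2)
        rw [sat_ex] at hex2
        obtain ⟨V, o, hMV, hs⟩ := hex2
        rw [sat_ex]
        exact ⟨V, o, hMV, (sat_or _ _ _ _).2 (Or.inr hs)⟩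

end AAUML
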